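/- arXiv:1603.03317 — 3 statements merged into one kernel-verified Lean document; each statement's English description precedes it below -/
import Mathlib

section
/- Let v : (0,1]² → (0,1] take values in {2^{-k} : k ∈ ℕ} and satisfy d(v(p), v(q)) ≤ (1/2) d(p,q) for all p,q ∈ (0,1]², where d denotes the dyadic metric on both domain and target. Let I×J ⊆ (0,1]² be a dyadic rectangle and let x ∈ I. If there exists y ∈ J with |J|/|I| ≤ v(x,y), then |J|/|I| ≤ v(x,y′) for every y′ ∈ J. -/
/-- The dyadic interval `(m 2^{-n}, (m+1) 2^{-n}] ⊆ (0,1]` (for `m < 2^n`). -/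
def dyadicI (n m : ℕ) : Set ℝ := Set.Ioc ((m : ℝ) / 2 ^ n) (((m : ℝ) + 1) / 2 ^ n)

/-- The dyadic distance of two points of `(0,1]`: the length of the smallest dyadic
interval containing both. -/
noncomputable def dyadDist (x y : ℝ) : ℝ :=
  sInf {l : ℝ | ∃ n m : ℕ, m < 2 ^ n ∧ x ∈ dyadicI n m ∧ y ∈ dyadicI n m ∧ l = ((2 : ℝ) ^ n)⁻¹}

/-- The dyadic distance of two points of `(0,1]²`: the side length of the smallest dyadic
square containing both. -/
noncomputable def dyadDist2 (p q : ℝ × ℝ) : ℝ :=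
  sInf {l : ℝ | ∃ n m m' : ℕ, m < 2 ^ n ∧ m' < 2 ^ n ∧
    p.1 ∈ dyadicI n m ∧ q.1 ∈ dyadicI n m ∧ p.2 ∈ dyadicI n m' ∧ q.2 ∈ dyadicI n m' ∧
    l = ((2 : ℝ) ^ n)⁻¹}

/-- The unit square `(0,1]²`. -/
def unitSq : Set (ℝ × ℝ) := Set.Ioc (0 : ℝ) 1 ×ˢ Set.Ioc (0 : ℝ) 1

lemma dyadicI_subset_Ioc {n m : ℕ} (hm : m < 2 ^ n) {x : ℝ} (hx : x ∈ dyadicI n m) :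
    x ∈ Set.Ioc (0:ℝ) 1 := by
  obtain ⟨h1, h2⟩ := hx
  have hpos : (0:ℝ) < 2 ^ n := by positivity
  have h0 : (0:ℝ) ≤ (m:ℝ)/2^n := by positivity
  have hm' : (m:ℝ) + 1 ≤ 2^n := by exact_mod_cast Nat.succ_le_of_lt hm
  refine ⟨lt_of_le_of_lt h0 h1, h2.trans ?_⟩
  rw [div_le_one hpos]; exact hm'

lemma exists_dyadic_mem (n : ℕ) {x : ℝ} (hx : x ∈ Set.Ioc (0:ℝ) 1) :
    ∃ m, m < 2 ^ n ∧ x ∈ dyadicI n m := by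
  have hpos : (0:ℝ) < 2 ^ n := by positivity
  set t := x * 2 ^ n with ht
  have htpos : 0 < t := mul_pos hx.1 hpos
  have hceil1 : 1 ≤ ⌈t⌉₊ := Nat.one_le_ceil_iff.mpr htpos
  refine ⟨⌈t⌉₊ - 1, ?_, ?_, ?_⟩
  · have : ⌈t⌉₊ ≤ 2 ^ n := by
      rw [Nat.ceil_le]
      push_cast
      nlinarith [hx.2, hpos]
    omega
  · have hc : ((⌈t⌉₊ - 1 : ℕ) : ℝ) = (⌈t⌉₊ : ℝ) - 1 := by
      push_cast [hceil1]; ring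
    rw [hc, div_lt_iff₀ hpos]
    have := Nat.ceil_lt_add_one htpos.le
    linarith
  · have hc : ((⌈t⌉₊ - 1 : ℕ) : ℝ) + 1 = (⌈t⌉₊ : ℝ) := by
      push_cast [hceil1]; ring
    rw [hc, le_div_iff₀ hpos]
    exact Nat.le_ceil t

lemma dyadic_lower {k k' n m : ℕ} (hkk : k < k') (_hm : m < 2 ^ n)
    (ha : ((2:ℝ)^k)⁻¹ ∈ dyadicI n m) (hb : ((2:ℝ)^k')⁻¹ ∈ dyadicI n m) :
    ((2:ℝ)^k)⁻¹ ≤ ((2:ℝ)^n)⁻¹ := by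
  have hpos : (0:ℝ) < 2 ^ n := by positivity
  have h1 : (m:ℝ)/2^n < ((2:ℝ)^k')⁻¹ := hb.1
  have h2 : ((2:ℝ)^k)⁻¹ ≤ ((m:ℝ)+1)/2^n := ha.2
  have h3 : ((2:ℝ)^k')⁻¹ ≤ ((2:ℝ)^(k+1))⁻¹ := by
    apply inv_anti₀ (by positivity)
    exact pow_le_pow_right₀ one_le_two hkk
  have hnk : n ≤ k := by
    by_contra hn
    push_neg at hn
    have : (2:ℝ)^(k+1) ≤ 2^n := pow_le_pow_right₀ one_le_two hn
    have h4 : ((2:ℝ)^n)⁻¹ ≤ ((2:ℝ)^(k+1))⁻¹ := inv_anti₀ (by positivity) this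
    have h5 : ((m:ℝ)+1)/2^n = (m:ℝ)/2^n + ((2:ℝ)^n)⁻¹ := by
      field_simp
    have h6 : ((2:ℝ)^(k+1))⁻¹ = ((2:ℝ)^k)⁻¹ / 2 := by
      rw [pow_succ]; field_simp
    nlinarith [inv_pos.mpr (show (0:ℝ) < 2^k by positivity)]
  exact inv_anti₀ (by positivity) (pow_le_pow_right₀ one_le_two hnk)

/-- Lemma 2.1: let `v : (0,1]² → (0,1]` take values in `{2^{-k} : k ∈ ℕ}` and be Lipschitz
with constant `1/2` for the dyadic metrics. Let `I×J` be a dyadic rectangle of the unit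
square (with `I` indexed by `(nI, mI)` and `J` by `(nJ, mJ)`) and let `x ∈ I`. If
`|J|/|I| ≤ v(x,y)` for some `y ∈ J`, then `|J|/|I| ≤ v(x,y')` for every `y' ∈ J`. -/
theorem stmt_3 (v : ℝ × ℝ → ℝ)
    (hval : ∀ q ∈ unitSq, ∃ k : ℕ, v q = (2 : ℝ) ^ (-(k : ℤ)))
    (hLip : ∀ q ∈ unitSq, ∀ q' ∈ unitSq, dyadDist (v q) (v q') ≤ (1 / 2) * dyadDist2 q q')
    (nI mI nJ mJ : ℕ) (hmI : mI < 2 ^ nI) (hmJ : mJ < 2 ^ nJ)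
    (x : ℝ) (hx : x ∈ dyadicI nI mI)
    (y : ℝ) (hy : y ∈ dyadicI nJ mJ)
    (hvy : ((2 : ℝ) ^ nJ)⁻¹ / ((2 : ℝ) ^ nI)⁻¹ ≤ v (x, y)) :
    ∀ y' ∈ dyadicI nJ mJ, ((2 : ℝ) ^ nJ)⁻¹ / ((2 : ℝ) ^ nI)⁻¹ ≤ v (x, y') := by
  intro y' hy'
  have hxI : x ∈ Set.Ioc (0:ℝ) 1 := dyadicI_subset_Ioc hmI hx
  have hyI : y ∈ Set.Ioc (0:ℝ) 1 := dyadicI_subset_Ioc hmJ hy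
  have hy'I : y' ∈ Set.Ioc (0:ℝ) 1 := dyadicI_subset_Ioc hmJ hy'
  have hu1 : (x, y) ∈ unitSq := ⟨hxI, hyI⟩
  have hu2 : (x, y') ∈ unitSq := ⟨hxI, hy'I⟩
  obtain ⟨k, hk⟩ := hval _ hu1
  obtain ⟨k', hk'⟩ := hval _ hu2
  have h2k : v (x, y) = ((2:ℝ)^k)⁻¹ := by
    rw [hk, zpow_neg, zpow_natCast]
  have h2k' : v (x, y') = ((2:ℝ)^k')⁻¹ := by
    rw [hk', zpow_neg, zpow_natCast]
  by_contra hcon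
  push_neg at hcon
  -- basic positivity facts
  have hpI : (0:ℝ) < 2 ^ nI := by positivity
  have hpJ : (0:ℝ) < 2 ^ nJ := by positivity
  have hpk : (0:ℝ) < 2 ^ k := by positivity
  have hpk' : (0:ℝ) < 2 ^ k' := by positivity
  have hE : ((2:ℝ)^nJ)⁻¹ / ((2:ℝ)^nI)⁻¹ = (2:ℝ)^nI / (2:ℝ)^nJ := by
    field_simp
  have hE1 : ((2:ℝ)^nJ)⁻¹ ≤ ((2:ℝ)^nJ)⁻¹ / ((2:ℝ)^nI)⁻¹ := by
    rw [hE, le_div_iff₀ hpJ]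
    have : (1:ℝ) ≤ 2 ^ nI := one_le_pow₀ (one_le_two (α:=ℝ))
    calc ((2:ℝ)^nJ)⁻¹ * 2^nJ = 1 := by field_simp
    _ ≤ 2^nI := this
  -- k < k'
  have hlt : ((2:ℝ)^k')⁻¹ < ((2:ℝ)^k)⁻¹ := by
    calc ((2:ℝ)^k')⁻¹ = v (x, y') := h2k'.symm
    _ < ((2:ℝ)^nJ)⁻¹ / ((2:ℝ)^nI)⁻¹ := hcon
    _ ≤ v (x, y) := hvy
    _ = ((2:ℝ)^k)⁻¹ := h2k
  have hkk' : k < k' := by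
    by_contra hkc
    push_neg at hkc
    have : ((2:ℝ)^k)⁻¹ ≤ ((2:ℝ)^k')⁻¹ :=
      inv_anti₀ (by positivity) (pow_le_pow_right₀ one_le_two hkc)
    linarith
  -- lower bound on value distance
  have hvy1 : v (x, y) ∈ Set.Ioc (0:ℝ) 1 := by
    rw [h2k]
    constructor
    · positivity
    · rw [inv_le_one_iff₀]
      right
      exact one_le_pow₀ (one_le_two (α:=ℝ))
  have hvy2 : v (x, y') ∈ Set.Ioc (0:ℝ) 1 := by
    rw [h2k']
    constructor
    · positivity
    · rw [inv_le_one_iff₀]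
      right
      exact one_le_pow₀ (one_le_two (α:=ℝ))
  have hmem0 : ∀ z : ℝ, z ∈ Set.Ioc (0:ℝ) 1 → z ∈ dyadicI 0 0 := by
    intro z hz
    simpa [dyadicI] using hz
  have hlow : ((2:ℝ)^k)⁻¹ ≤ dyadDist (v (x, y)) (v (x, y')) := by
    apply le_csInf
    · exact ⟨1, 0, 0, by norm_num, hmem0 _ hvy1, hmem0 _ hvy2, by norm_num⟩
    · rintro l ⟨n, m, hm, hva, hvb, rfl⟩
      rw [h2k] at hva
      rw [h2k'] at hvb
      exact dyadic_lower hkk' hm hva hvb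
  -- upper bound on point distance
  have hup : dyadDist2 (x, y) (x, y') ≤ ((2:ℝ)^nJ)⁻¹ := by
    obtain ⟨m, hm, hxm⟩ := exists_dyadic_mem nJ hxI
    apply csInf_le
    · refine ⟨0, ?_⟩
      rintro l ⟨n, m1, m2, _, _, _, _, _, _, rfl⟩
      positivity
    · exact ⟨nJ, m, mJ, hm, hmJ, hxm, hxm, hy, hy', rfl⟩
  have hlip := hLip _ hu1 _ hu2
  have hJk : ((2:ℝ)^nJ)⁻¹ ≤ ((2:ℝ)^k)⁻¹ := by
    calc ((2:ℝ)^nJ)⁻¹ ≤ ((2:ℝ)^nJ)⁻¹ / ((2:ℝ)^nI)⁻¹ := hE1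
    _ ≤ v (x, y) := hvy
    _ = ((2:ℝ)^k)⁻¹ := h2k
  have hfin : ((2:ℝ)^k)⁻¹ ≤ (1/2) * ((2:ℝ)^nJ)⁻¹ := by
    calc ((2:ℝ)^k)⁻¹ ≤ dyadDist (v (x, y)) (v (x, y')) := hlow
    _ ≤ (1/2) * dyadDist2 (x, y) (x, y') := hlip
    _ ≤ (1/2) * ((2:ℝ)^nJ)⁻¹ := by linarith
  have : (0:ℝ) < ((2:ℝ)^nJ)⁻¹ := by positivity
  linarith
end

section
/- Let φ be a real, even Schwartz function on ℝ with ∫_ℝ φ(u) du = 0. Then there exists a Schwartz function Φ on ℝ such that for every x ≠ 0, Φ(x) = ∫_0^1 t φ(t x) (dt/t) = (1/x) ∫_0^x φ(u) du. -/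
open MeasureTheory intervalIntegral Set

namespace Stmt11Aux

noncomputable def phiD (φ : SchwartzMap ℝ ℝ) : ℕ → SchwartzMap ℝ ℝ
  | 0 => φ
  | n+1 => SchwartzMap.derivCLM ℝ ℝ (phiD φ n)

noncomputable def g (φ : SchwartzMap ℝ ℝ) (n : ℕ) (x : ℝ) : ℝ :=
  ∫ t in Set.Ioc (0:ℝ) 1, t ^ n * phiD φ n (t * x)

noncomputable def Psi (φ : SchwartzMap ℝ ℝ) (x : ℝ) : ℝ := ∫ u in (0:ℝ)..x, φ u

lemma phiD_bound (φ : SchwartzMap ℝ ℝ) (n : ℕ) : ∃ C, 0 ≤ C ∧ ∀ x, |phiD φ n x| ≤ C := by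
  obtain ⟨C, hC0, hC⟩ := (phiD φ n).decay 0 0
  exact ⟨C, hC0.le, fun x => by simpa [Real.norm_eq_abs] using hC x⟩

lemma cont_integrand (φ : SchwartzMap ℝ ℝ) (n : ℕ) (x : ℝ) :
    Continuous fun t : ℝ => t ^ n * phiD φ n (t * x) :=
  (continuous_pow n).mul ((phiD φ n).continuous.comp (continuous_id.mul continuous_const))

lemma hasDerivAt_g (φ : SchwartzMap ℝ ℝ) (n : ℕ) (x₀ : ℝ) :
    HasDerivAt (g φ n) (g φ (n+1) x₀) x₀ := by
  obtain ⟨B, hB0, hB⟩ := phiD_bound φ (n+1)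
  have h := _root_.hasDerivAt_integral_of_dominated_loc_of_deriv_le (μ := volume.restrict (Ioc (0:ℝ) 1))
    (F := fun x t => t ^ n * phiD φ n (t * x))
    (F' := fun x t => t ^ (n+1) * phiD φ (n+1) (t * x))
    (x₀ := x₀) (bound := fun _ => B) (s := Metric.ball x₀ 1) (Metric.ball_mem_nhds x₀ one_pos)
    (Filter.Eventually.of_forall fun x => (cont_integrand φ n x).aestronglyMeasurable.restrict)
    ((cont_integrand φ n x₀).integrableOn_Ioc)
    (cont_integrand φ (n+1) x₀).aestronglyMeasurable.restrict
    ?_ (integrable_const B) ?_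
  · exact h.2
  · filter_upwards [ae_restrict_mem measurableSet_Ioc] with t ht x _
    have ht0 : 0 < t := ht.1
    have ht1 : t ≤ 1 := ht.2
    calc ‖t ^ (n+1) * phiD φ (n+1) (t * x)‖
        = t ^ (n+1) * |phiD φ (n+1) (t * x)| := by
          rw [norm_mul, Real.norm_eq_abs, Real.norm_eq_abs, abs_of_nonneg (by positivity)]
      _ ≤ 1 * B := by
          apply mul_le_mul (pow_le_one₀ ht0.le ht1) (hB _) (abs_nonneg _) zero_le_one
      _ = B := one_mul B
  · refine Filter.Eventually.of_forall fun t x _ => ?_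
    have hm : HasDerivAt (fun x : ℝ => t * x) t x := by
      simpa using (hasDerivAt_id x).const_mul t
    have hd : HasDerivAt (fun x => phiD φ n (t * x)) (deriv (phiD φ n) (t * x) * t) x :=
      ((phiD φ n).differentiable.differentiableAt.hasDerivAt).comp x hm
    have := hd.const_mul (t ^ n)
    convert this using 1
    rfl
    simp only [phiD, SchwartzMap.derivCLM_apply]
    ring


lemma deriv_g (φ : SchwartzMap ℝ ℝ) (n : ℕ) : deriv (g φ n) = g φ (n+1) :=
  funext fun x => (hasDerivAt_g φ n x).deriv

lemma contDiff_g (φ : SchwartzMap ℝ ℝ) (m : ℕ) : ∀ n, ContDiff ℝ (m : ℕ∞) (g φ n) := by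
  induction m with
  | zero =>
    intro n
    refine contDiff_zero.2 (continuous_iff_continuousAt.2 fun x =>
      (hasDerivAt_g φ n x).differentiableAt.continuousAt)
  | succ m ih =>
    intro n
    refine contDiff_succ_iff_deriv.2 ⟨fun x => (hasDerivAt_g φ n x).differentiableAt,
      fun h => absurd h (by exact_mod_cast WithTop.natCast_ne_top m), by rw [deriv_g]; exact ih (n+1)⟩


lemma g_eq_interval (φ : SchwartzMap ℝ ℝ) (n : ℕ) (x : ℝ) :
    g φ n x = ∫ t in (0:ℝ)..1, t ^ n * phiD φ n (t * x) :=
  (intervalIntegral.integral_of_le zero_le_one).symm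

lemma recursion (φ : SchwartzMap ℝ ℝ) (n : ℕ) (x : ℝ) :
    x * g φ (n+1) x = phiD φ n x - (n+1 : ℝ) * g φ n x := by
  have hderiv : ∀ t ∈ uIcc (0:ℝ) 1,
      HasDerivAt (fun t => t ^ (n+1) * phiD φ n (t * x))
        ((n+1 : ℝ) * t ^ n * phiD φ n (t * x) + t ^ (n+1) * (x * phiD φ (n+1) (t * x))) t := by
    intro t _
    have h1 : HasDerivAt (fun t : ℝ => t ^ (n+1)) ((n+1 : ℝ) * t ^ n) t := by
      simpa using hasDerivAt_pow (n+1) t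
    have hm : HasDerivAt (fun t : ℝ => t * x) x t := by
      simpa using (hasDerivAt_id t).mul_const x
    have h2 : HasDerivAt (fun t => phiD φ n (t * x)) (deriv (phiD φ n) (t * x) * x) t :=
      ((phiD φ n).differentiable.differentiableAt.hasDerivAt).comp t hm
    have := h1.mul h2
    convert this using 1
    iterate 3 rfl
    simp only [phiD, SchwartzMap.derivCLM_apply]
    ring
  have hcont : Continuous fun t : ℝ =>
      (n+1 : ℝ) * t ^ n * phiD φ n (t * x) + t ^ (n+1) * (x * phiD φ (n+1) (t * x)) := by
    exact ((continuous_const.mul (continuous_pow n)).mul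
      ((phiD φ n).continuous.comp (continuous_id.mul continuous_const))).add
      ((continuous_pow (n+1)).mul (continuous_const.mul
        ((phiD φ (n+1)).continuous.comp (continuous_id.mul continuous_const))))
  have hFTC := intervalIntegral.integral_eq_sub_of_hasDerivAt hderiv
    (hcont.intervalIntegrable 0 1)
  simp only [one_pow, one_mul, zero_pow (Nat.succ_ne_zero n), zero_mul] at hFTC
  have hsplit : (∫ t in (0:ℝ)..1,
      ((n+1 : ℝ) * t ^ n * phiD φ n (t * x) + t ^ (n+1) * (x * phiD φ (n+1) (t * x))))
      = (n+1 : ℝ) * g φ n x + x * g φ (n+1) x := by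
    have hi1 : IntervalIntegrable (fun t : ℝ => (n+1:ℝ) * t ^ n * phiD φ n (t * x)) volume 0 1 :=
      Continuous.intervalIntegrable (by fun_prop) 0 1
    have hi2 : IntervalIntegrable (fun t : ℝ => t ^ (n+1) * (x * phiD φ (n+1) (t * x))) volume 0 1 :=
      Continuous.intervalIntegrable (by fun_prop) 0 1
    rw [intervalIntegral.integral_add hi1 hi2]
    congr 1
    · rw [g_eq_interval]
      rw [← intervalIntegral.integral_const_mul]
      congr 1; ext t; ring
    · rw [g_eq_interval]
      rw [← intervalIntegral.integral_const_mul]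
      congr 1; ext t; ring
  rw [hsplit] at hFTC
  linarith [hFTC]

lemma half_zero (φ : SchwartzMap ℝ ℝ) (heven : ∀ x : ℝ, φ (-x) = φ x)
    (hint : ∫ u : ℝ, φ u = 0) : ∫ u in Ioi (0:ℝ), φ u = 0 := by
  have h1 : ∫ u in Ioi (0:ℝ), φ (-u) = ∫ u in Iic (0:ℝ), φ u := by
    simpa using integral_comp_neg_Ioi (0:ℝ) (fun u => φ u)
  have h2 : ∫ u in Iic (0:ℝ), φ u = ∫ u in Ioi (0:ℝ), φ u := by
    rw [← h1]; simp only [heven]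
  have h3 := integral_Iic_add_Ioi (b := (0:ℝ)) (f := fun u => φ u)
    (φ.integrable (μ:=volume)).integrableOn (φ.integrable (μ:=volume)).integrableOn
  rw [hint, h2] at h3
  linarith

lemma Psi_odd (φ : SchwartzMap ℝ ℝ) (heven : ∀ x : ℝ, φ (-x) = φ x) (x : ℝ) :
    Psi φ (-x) = -Psi φ x := by
  have h := intervalIntegral.integral_comp_neg (a := (0:ℝ)) (b := x) (fun u => φ u)
  simp only [heven, neg_zero] at h
  unfold Psi
  rw [h, intervalIntegral.integral_symm]

lemma Psi_tail (φ : SchwartzMap ℝ ℝ) (heven : ∀ x : ℝ, φ (-x) = φ x)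
    (hint : ∫ u : ℝ, φ u = 0) {x : ℝ} (hx : 1 ≤ x) :
    Psi φ x = -∫ u in Ioi x, φ u := by
  have hx0 : (0:ℝ) < x := lt_of_lt_of_le one_pos hx
  have hsplit : (∫ u in Ioc (0:ℝ) x, φ u) + (∫ u in Ioi x, φ u) = ∫ u in Ioi (0:ℝ), φ u := by
    rw [← MeasureTheory.setIntegral_union (Ioc_disjoint_Ioi le_rfl) measurableSet_Ioi
      (φ.integrable (μ:=volume)).integrableOn (φ.integrable (μ:=volume)).integrableOn,
      Ioc_union_Ioi_eq_Ioi hx0.le]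
  rw [half_zero φ heven hint] at hsplit
  unfold Psi
  rw [intervalIntegral.integral_of_le hx0.le]
  linarith

lemma Psi_decay (φ : SchwartzMap ℝ ℝ) (heven : ∀ x : ℝ, φ (-x) = φ x)
    (hint : ∫ u : ℝ, φ u = 0) (k : ℕ) : ∃ C, ∀ x, |x| ^ k * |Psi φ x| ≤ C := by
  obtain ⟨B, hB0, hB⟩ := φ.decay 0 0
  have hBb : ∀ u : ℝ, |φ u| ≤ B := fun u => by simpa [Real.norm_eq_abs] using hB u
  obtain ⟨D, hD0, hD⟩ := φ.decay (k+2) 0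
  have hDb : ∀ u : ℝ, |u| ^ (k+2) * |φ u| ≤ D := fun u => by
    simpa [Real.norm_eq_abs] using hD u
  -- bound for x ≥ 1
  have key : ∀ x : ℝ, 1 ≤ x → x ^ k * |Psi φ x| ≤ D := by
    intro x hx
    have hx0 : (0:ℝ) < x := lt_of_lt_of_le one_pos hx
    rw [Psi_tail φ heven hint hx, abs_neg]
    have hmono : |∫ u in Ioi x, φ u| ≤ ∫ u in Ioi x, D * u ^ (-(k+2:ℝ)) := by
      rw [← Real.norm_eq_abs]
      refine (MeasureTheory.norm_integral_le_integral_norm _).trans ?_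
      refine setIntegral_mono_on (φ.integrable (μ:=volume)).norm.integrableOn
        ((integrableOn_Ioi_rpow_of_lt (by push_cast; linarith [Nat.cast_nonneg (α:=ℝ) k] : (-(k+2:ℝ)) < -1) hx0).const_mul D) measurableSet_Ioi ?_
      intro u hu
      have hu1 : 1 ≤ u := hx.trans (le_of_lt hu)
      have hu0 : 0 < u := lt_of_lt_of_le one_pos hu1
      have := hDb u
      rw [abs_of_pos hu0] at this
      have hpow : u ^ (-(k+2:ℝ)) = (u ^ (k+2))⁻¹ := by
        rw [← Real.rpow_natCast u (k+2), ← Real.rpow_neg hu0.le]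
        norm_num
      rw [Real.norm_eq_abs, hpow]
      calc |φ u| = (u ^ (k+2) * |φ u|) * (u ^ (k+2))⁻¹ := by field_simp
        _ ≤ D * (u ^ (k+2))⁻¹ := mul_le_mul_of_nonneg_right this (by positivity)
    have hval : ∫ u in Ioi x, D * u ^ (-(k+2:ℝ)) = D * (-x ^ (-(k+2:ℝ)+1) / (-(k+2:ℝ)+1)) := by
      rw [MeasureTheory.integral_const_mul, integral_Ioi_rpow_of_lt (by push_cast; linarith [Nat.cast_nonneg (α:=ℝ) k] : (-(k+2:ℝ)) < -1) hx0]
    calc x ^ k * |∫ u in Ioi x, φ u|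
        ≤ x ^ k * (D * (-x ^ (-(k+2:ℝ)+1) / (-(k+2:ℝ)+1))) :=
          mul_le_mul_of_nonneg_left (hmono.trans_eq hval) (by positivity)
      _ = D * (x ^ k * x ^ (-(k+1:ℝ))) / ((k:ℝ)+1) := by
          have h1 : (-(k+2:ℝ)+1) = -(k+1:ℝ) := by ring
          rw [h1, neg_div_neg_eq]; ring
      _ = D * x ^ (-1:ℝ) / ((k:ℝ)+1) := by
          rw [← Real.rpow_natCast x k, ← Real.rpow_add hx0]; norm_num
      _ ≤ D := by
          have h2 : x ^ (-1:ℝ) ≤ 1 := Real.rpow_le_one_of_one_le_of_nonpos hx (by norm_num)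
          have h3 : (1:ℝ) ≤ (k:ℝ)+1 := by linarith [Nat.cast_nonneg (α:=ℝ) k]
          have h4 : (0:ℝ) ≤ x ^ (-1:ℝ) := Real.rpow_nonneg hx0.le _
          calc D * x ^ (-1:ℝ) / ((k:ℝ)+1) ≤ D * 1 / 1 := by
                apply div_le_div₀ (by linarith) (by nlinarith) one_pos h3
            _ = D := by ring
  refine ⟨max D B, fun x => ?_⟩
  rcases le_or_gt (|x|) 1 with h1 | h1
  · have hP : |Psi φ x| ≤ B := by
      have := intervalIntegral.norm_integral_le_of_norm_le_const
        (C := B) (f := fun u => φ u) (a := (0:ℝ)) (b := x) (fun u _ => by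
          simpa [Real.norm_eq_abs] using hBb u)
      rw [sub_zero] at this
      calc |Psi φ x| ≤ B * |x| := this
        _ ≤ B * 1 := mul_le_mul_of_nonneg_left h1 hB0.le
        _ = B := mul_one B
    calc |x| ^ k * |Psi φ x| ≤ 1 * B := by
          apply mul_le_mul (pow_le_one₀ (abs_nonneg x) h1) hP (abs_nonneg _) zero_le_one
      _ ≤ max D B := by simpa using le_max_right D B
  · have h1' : 1 ≤ |x| := h1.le
    rcases le_or_gt 0 x with hx | hx
    · have hx1 : 1 ≤ x := by rwa [abs_of_nonneg hx] at h1'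
      rw [abs_of_nonneg hx]
      exact (key x hx1).trans (le_max_left D B)
    · have hx1 : 1 ≤ -x := by rwa [abs_of_neg hx] at h1'
      have hPs : |Psi φ x| = |Psi φ (-x)| := by
        rw [show x = -(-x) by ring, Psi_odd φ heven (-x), abs_neg, neg_neg]
      rw [abs_of_neg hx, hPs]
      exact (key (-x) hx1).trans (le_max_left D B)

lemma g0_mul (φ : SchwartzMap ℝ ℝ) (x : ℝ) : x * g φ 0 x = Psi φ x := by
  rcases eq_or_ne x 0 with rfl | hx
  · simp [Psi]
  · have h : g φ 0 x = x⁻¹ * Psi φ x := by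
      rw [g_eq_interval]
      simp only [pow_zero, one_mul, phiD]
      rw [intervalIntegral.integral_comp_mul_right (fun u => φ u) hx]
      simp [Psi, smul_eq_mul]
    rw [h, ← mul_assoc, mul_inv_cancel₀ hx, one_mul]

lemma g_decay (φ : SchwartzMap ℝ ℝ) (heven : ∀ x : ℝ, φ (-x) = φ x)
    (hint : ∫ u : ℝ, φ u = 0) (k : ℕ) :
    ∀ n, ∃ C, ∀ x, |x| ^ k * |g φ n x| ≤ C := by
  induction k with
  | zero =>
    intro n
    obtain ⟨B, hB0, hB⟩ := phiD_bound φ n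
    refine ⟨B, fun x => ?_⟩
    simp only [pow_zero, one_mul]
    have : ‖∫ t in Set.Ioc (0:ℝ) 1, t ^ n * phiD φ n (t * x)‖ ≤ B * (volume (Set.Ioc (0:ℝ) 1)).toReal := by
      apply norm_setIntegral_le_of_norm_le_const
      · simp [Real.volume_Ioc]
      · intro t ht
        rw [Real.norm_eq_abs, abs_mul, abs_pow]
        calc |t| ^ n * |phiD φ n (t * x)| ≤ 1 * B := by
              apply mul_le_mul _ (hB _) (abs_nonneg _) zero_le_one
              exact pow_le_one₀ (abs_nonneg t) (by rw [abs_of_pos ht.1]; exact ht.2)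
          _ = B := one_mul B
    simpa [g, Real.volume_Ioc, Real.norm_eq_abs] using this
  | succ k ih =>
    intro n
    match n with
    | 0 =>
      obtain ⟨C, hC⟩ := Psi_decay φ heven hint k
      refine ⟨C, fun x => ?_⟩
      calc |x| ^ (k+1) * |g φ 0 x| = |x| ^ k * |x * g φ 0 x| := by
            rw [abs_mul]; ring
        _ = |x| ^ k * |Psi φ x| := by rw [g0_mul]
        _ ≤ C := hC x
    | m+1 =>
      obtain ⟨C₁, hC₁⟩ := ih m
      obtain ⟨C₂, hC₂0, hC₂⟩ := (phiD φ m).decay k 0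
      refine ⟨C₂ + (m+1 : ℝ) * C₁, fun x => ?_⟩
      have hstep : |x| ^ k * |x * g φ (m+1) x| ≤ C₂ + (m+1 : ℝ) * C₁ := by
        rw [recursion φ m x]
        calc |x| ^ k * |phiD φ m x - (m+1 : ℝ) * g φ m x|
            ≤ |x| ^ k * (|phiD φ m x| + (m+1 : ℝ) * |g φ m x|) := by
              apply mul_le_mul_of_nonneg_left _ (by positivity)
              refine (abs_sub _ _).trans ?_
              rw [abs_mul, abs_of_nonneg (by positivity : (0:ℝ) ≤ (m+1:ℝ))]
        _ = |x| ^ k * |phiD φ m x| + (m+1 : ℝ) * (|x| ^ k * |g φ m x|) := by ring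
        _ ≤ C₂ + (m+1 : ℝ) * C₁ := by
              have h1 : |x| ^ k * |phiD φ m x| ≤ C₂ := by
                simpa [Real.norm_eq_abs] using hC₂ x
              have h2 := hC₁ x
              nlinarith [abs_nonneg x, pow_nonneg (abs_nonneg x) k]
      calc |x| ^ (k+1) * |g φ (m+1) x| = |x| ^ k * |x * g φ (m+1) x| := by
            rw [abs_mul]; ring
        _ ≤ C₂ + (m+1 : ℝ) * C₁ := hstep

lemma iteratedDeriv_g (φ : SchwartzMap ℝ ℝ) (n : ℕ) :
    iteratedDeriv n (g φ 0) = g φ n := by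
  induction n with
  | zero => simp [iteratedDeriv_zero]
  | succ n ih => rw [iteratedDeriv_succ, ih, deriv_g]

noncomputable def PhiS (φ : SchwartzMap ℝ ℝ) (heven : ∀ x : ℝ, φ (-x) = φ x)
    (hint : ∫ u : ℝ, φ u = 0) : SchwartzMap ℝ ℝ where
  toFun := g φ 0
  smooth' := contDiff_infty.2 fun m => contDiff_g φ m 0
  decay' := by
    intro k n
    obtain ⟨C, hC⟩ := g_decay φ heven hint k n
    refine ⟨C, fun x => ?_⟩
    rw [norm_iteratedFDeriv_eq_norm_iteratedDeriv, iteratedDeriv_g, Real.norm_eq_abs,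
      Real.norm_eq_abs]
    exact hC x


end Stmt11Aux

open Stmt11Aux

/-- For a real, even Schwartz function `φ` with `∫ φ = 0`, the telescoping integral
`∫_0^1 φ_t(x) dt/t = ∫_0^1 t φ(tx) dt/t` coincides for `x ≠ 0` with a Schwartz function,
and equals `(1/x) ∫_0^x φ(u) du`. -/
theorem stmt_11 (φ : SchwartzMap ℝ ℝ)
    (heven : ∀ x : ℝ, φ (-x) = φ x)
    (hint : ∫ u : ℝ, φ u = 0) :
    ∃ Φ : SchwartzMap ℝ ℝ, ∀ x : ℝ, x ≠ 0 →
      Φ x = ∫ t in (0 : ℝ)..1, (t * φ (t * x)) / t ∧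
      Φ x = (1 / x) * ∫ u in (0 : ℝ)..x, φ u := by
  refine ⟨PhiS φ heven hint, fun x hx => ?_⟩
  have hPhi : PhiS φ heven hint x = g φ 0 x := rfl
  constructor
  · rw [hPhi, g_eq_interval]
    rw [intervalIntegral.integral_of_le zero_le_one, intervalIntegral.integral_of_le zero_le_one]
    refine setIntegral_congr_fun measurableSet_Ioc fun t ht => ?_
    simp only [pow_zero, one_mul, phiD]
    rw [mul_div_cancel_left₀ _ (ne_of_gt ht.1)]
  · have := g0_mul φ x
    rw [hPhi]
    field_simp
    rw [mul_comm]
    exact this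
end

section
/- Let u₁, u₂ > 0 satisfy |log₂ u₁ − log₂ u₂| < 1/4. Define v_i = 2^{⌊log₂ u_i⌋} and w_i = 2^{⌊1/2 + log₂ u_i⌋} for i = 1, 2, where ⌊·⌋ is the integer floor. If v₁ > v₂, then v₁ = 2 v₂ and w₁ = w₂ = v₁. -/
/-- Let `u₁, u₂ > 0` with `|log₂ u₁ - log₂ u₂| < 1/4`, and set `vᵢ = 2^⌊log₂ uᵢ⌋`,
`wᵢ = 2^⌊1/2 + log₂ uᵢ⌋`. If `v₁ > v₂`, then `v₁ = 2 v₂` and `w₁ = w₂ = v₁`. -/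
theorem stmt_13 (u₁ u₂ : ℝ) (h₁ : 0 < u₁) (h₂ : 0 < u₂)
    (hlog : |Real.logb 2 u₁ - Real.logb 2 u₂| < 1 / 4)
    (hv : (2 : ℝ) ^ (⌊Real.logb 2 u₁⌋) > (2 : ℝ) ^ (⌊Real.logb 2 u₂⌋)) :
    (2 : ℝ) ^ (⌊Real.logb 2 u₁⌋) = 2 * (2 : ℝ) ^ (⌊Real.logb 2 u₂⌋) ∧
    (2 : ℝ) ^ (⌊1 / 2 + Real.logb 2 u₁⌋) = (2 : ℝ) ^ (⌊1 / 2 + Real.logb 2 u₂⌋) ∧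
    (2 : ℝ) ^ (⌊1 / 2 + Real.logb 2 u₁⌋) = (2 : ℝ) ^ (⌊Real.logb 2 u₁⌋) := by
  set x := Real.logb 2 u₁ with hx
  set y := Real.logb 2 u₂ with hy
  have hfloor : ⌊y⌋ < ⌊x⌋ := by
    by_contra h
    push_neg at h
    exact absurd (zpow_le_zpow_right₀ (by norm_num : (1:ℝ) ≤ 2) h) (not_le.mpr hv)
  obtain ⟨ha, hb⟩ := abs_lt.mp hlog
  have hxl : (⌊x⌋ : ℝ) ≤ x := Int.floor_le x
  have hyl : (⌊y⌋ : ℝ) ≤ y := Int.floor_le y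
  have hxu : x < ⌊x⌋ + 1 := Int.lt_floor_add_one x
  have hyu : y < ⌊y⌋ + 1 := Int.lt_floor_add_one y
  have hfe : ⌊x⌋ = ⌊y⌋ + 1 := by
    have : (⌊x⌋ : ℝ) < ⌊y⌋ + 2 := by
      have : (⌊x⌋:ℝ) ≤ x := hxl
      linarith
    have := (Int.cast_lt (R := ℝ) (m := ⌊x⌋) (n := ⌊y⌋ + 2)).mp (by push_cast; linarith)
    
    omega
  have hfe' : (⌊x⌋ : ℝ) = ⌊y⌋ + 1 := by exact_mod_cast hfe
  have hw1 : ⌊1/2 + x⌋ = ⌊x⌋ := by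
    rw [Int.floor_eq_iff]
    constructor
    · linarith
    · push_cast
      linarith
  have hw2 : ⌊1/2 + y⌋ = ⌊x⌋ := by
    rw [Int.floor_eq_iff]
    constructor
    · rw [hfe']; linarith
    · push_cast [hfe']
      linarith
  refine ⟨?_, by rw [hw1, hw2], by rw [hw1]⟩
  rw [hfe, zpow_add_one₀ (by norm_num : (2:ℝ) ≠ 0)]
  ring
end
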